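/- For every β ∈ (0,1) and every 0 < s ≤ t, (β/Γ(1−β)) ∫_0^∞ ((1 − e^{−2qs})/2) · ((1 + e^{−2q(t−s)})/2) · q^{−β−1} dq = 2^{β−2} (s^β + t^β − (t−s)^β). Equivalently, the covariance of the Karlin Gaussian process ζ_{2,β} is Cov(ζ_{2,β}(s), ζ_{2,β}(t)) = 2^{β−1}·(1/2)·(1/2)(s^β + t^β − |t−s|^β), identifying ζ_{2,β} as a constant multiple of a fractional Brownian motion with Hurst index β/2. -/

import Mathlib

open MeasureTheory Real Set Filter Topology

/-- Integrability of the key integrand. -/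
lemma karlin_key_integrable {β : ℝ} (hβ0 : 0 < β) (hβ1 : β < 1) {a : ℝ} (ha : 0 ≤ a) :
    IntegrableOn (fun q : ℝ => (1 - Real.exp (-(a * q))) * q ^ (-β - 1)) (Ioi (0:ℝ)) := by
  have hmeas : AEStronglyMeasurable (fun q : ℝ => (1 - Real.exp (-(a * q))) * q ^ (-β - 1))
      (volume.restrict (Ioi (0:ℝ))) := by
    apply ContinuousOn.aestronglyMeasurable _ measurableSet_Ioi
    exact ((continuous_const.sub ((continuous_const.mul continuous_id).neg.rexp)).continuousOn).mul
      (fun x hx => (Real.continuousAt_rpow_const x _ (Or.inl (ne_of_gt hx))).continuousWithinAt)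
  have key : ∀ q : ℝ, 0 < q → 0 ≤ 1 - Real.exp (-(a * q)) ∧ 1 - Real.exp (-(a * q)) ≤ a * q := by
    intro q hq
    constructor
    · have : Real.exp (-(a * q)) ≤ 1 := Real.exp_le_one_iff.mpr (by nlinarith)
      linarith
    · have := Real.add_one_le_exp (-(a * q))
      nlinarith [Real.exp_pos (-(a * q))]
  have h1 : IntegrableOn (fun q : ℝ => (1 - Real.exp (-(a * q))) * q ^ (-β - 1)) (Ioc 0 1) := by
    have hbd : IntegrableOn (fun q : ℝ => a * q ^ (-β)) (Ioc (0:ℝ) 1) :=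
      ((intervalIntegral.intervalIntegrable_rpow' (by linarith :
        (-1:ℝ) < -β) (a := 0) (b := 1)).1).const_mul a
    refine Integrable.mono' hbd (hmeas.mono_measure
      (Measure.restrict_mono Ioc_subset_Ioi_self le_rfl)) ?_
    filter_upwards [ae_restrict_mem measurableSet_Ioc] with q hq
    obtain ⟨h0, h1⟩ := key q hq.1
    have hqpow : (0:ℝ) < q ^ (-β - 1) := Real.rpow_pos_of_pos hq.1 _
    rw [Real.norm_eq_abs, abs_of_nonneg (by positivity)]
    have : q * q ^ (-β - 1) = q ^ (-β) := by
      rw [mul_comm, ← Real.rpow_add_one (ne_of_gt hq.1) (-β - 1), show -β - 1 + 1 = -β by ring]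
    nlinarith
  have h2 : IntegrableOn (fun q : ℝ => (1 - Real.exp (-(a * q))) * q ^ (-β - 1)) (Ioi 1) := by
    have hbd : IntegrableOn (fun q : ℝ => q ^ (-β - 1)) (Ioi (1:ℝ)) :=
      integrableOn_Ioi_rpow_of_lt (by linarith) one_pos
    refine Integrable.mono' hbd (hmeas.mono_measure
      (Measure.restrict_mono (Ioi_subset_Ioi (by norm_num)) le_rfl)) ?_
    filter_upwards [ae_restrict_mem measurableSet_Ioi] with q hq
    have hq0 : (0:ℝ) < q := lt_trans one_pos hq
    obtain ⟨h0, _⟩ := key q hq0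
    have hqpow : (0:ℝ) < q ^ (-β - 1) := Real.rpow_pos_of_pos hq0 _
    have hexp : 0 < Real.exp (-(a * q)) := Real.exp_pos _
    rw [Real.norm_eq_abs, abs_of_nonneg (by positivity)]
    nlinarith
  have := h1.union h2
  rwa [Ioc_union_Ioi_eq_Ioi (by norm_num : (0:ℝ) ≤ 1)] at this

/-- Integrability of the exponential part. -/
lemma karlin_exp_integrable {β : ℝ} (hβ1 : β < 1) {a : ℝ} (ha : 0 < a) :
    IntegrableOn (fun q : ℝ => Real.exp (-(a * q)) * q ^ (-β)) (Ioi (0:ℝ)) := by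
  have := integrableOn_rpow_mul_exp_neg_mul_rpow (p := 1) (s := -β) (b := a)
    (by linarith) one_pos ha
  refine this.congr_fun (fun x hx => ?_) measurableSet_Ioi
  simp only [Real.rpow_one]
  ring_nf

/-- Value of the key integral. -/
lemma karlin_key_value {β : ℝ} (hβ0 : 0 < β) (hβ1 : β < 1) {a : ℝ} (ha : 0 ≤ a) :
    ∫ q in Ioi (0:ℝ), (1 - Real.exp (-(a * q))) * q ^ (-β - 1)
      = Real.Gamma (1 - β) / β * a ^ β := by
  rcases eq_or_lt_of_le ha with rfl | ha'
  · simp [Real.zero_rpow (ne_of_gt hβ0)]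
  set G : ℝ → ℝ := fun q => -(1/β) * ((1 - Real.exp (-(a * q))) * q ^ (-β)) with hGdef
  set g : ℝ → ℝ := fun q =>
    -(1/β) * (Real.exp (-(a * q)) * a * q ^ (-β) + (1 - Real.exp (-(a * q))) * (-β * q ^ (-β - 1)))
    with hgdef
  have hβne : β ≠ 0 := ne_of_gt hβ0
  have hderiv : ∀ q ∈ Ioi (0:ℝ), HasDerivAt G (g q) q := by
    intro q hq
    have h1 : HasDerivAt (fun x : ℝ => 1 - Real.exp (-(a * x))) (Real.exp (-(a * q)) * a) q := by
      have := (((hasDerivAt_id q).const_mul a).neg.exp).const_sub 1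
      simp only [id_eq, mul_one, Pi.neg_apply] at this
      exact this.congr_deriv (by ring)
    have h2 : HasDerivAt (fun x : ℝ => x ^ (-β)) (-β * q ^ (-β - 1)) q :=
      Real.hasDerivAt_rpow_const (Or.inl (ne_of_gt hq))
    exact (h1.mul h2).const_mul _
  have hexpint := karlin_exp_integrable hβ1 ha'
  have hkeyint := karlin_key_integrable hβ0 hβ1 ha
  have hgeq : ∀ q : ℝ, g q = (1 - Real.exp (-(a * q))) * q ^ (-β - 1)
      - (a / β) * (Real.exp (-(a * q)) * q ^ (-β)) := by
    intro q
    simp only [hgdef]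
    field_simp
    ring
  have hgint : IntegrableOn g (Ioi (0:ℝ)) := by
    exact IntegrableOn.congr_fun (hkeyint.sub (hexpint.const_mul (a / β)))
      (fun x _ => (hgeq x).symm) measurableSet_Ioi
  have hcont : ContinuousWithinAt G (Ici (0:ℝ)) 0 := by
    have hG0 : G 0 = 0 := by simp [hGdef]
    rw [ContinuousWithinAt, hG0]
    refine squeeze_zero_norm' (a := fun q => 1/β * a * q ^ (1 - β)) ?_ ?_
    · filter_upwards [self_mem_nhdsWithin] with q (hq : 0 ≤ q)
      rcases eq_or_lt_of_le hq with rfl | hq'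
      · simp [hGdef, Real.zero_rpow (show (1:ℝ) - β ≠ 0 by intro h; linarith),
          Real.zero_rpow (show -β ≠ 0 by simpa using hβne)]
      · have h0 : 0 ≤ 1 - Real.exp (-(a * q)) := by
          have : Real.exp (-(a * q)) ≤ 1 := Real.exp_le_one_iff.mpr (by nlinarith)
          linarith
        have h1 : 1 - Real.exp (-(a * q)) ≤ a * q := by
          have := Real.add_one_le_exp (-(a * q))
          nlinarith [Real.exp_pos (-(a * q))]
        have hpow : (0:ℝ) < q ^ (-β) := Real.rpow_pos_of_pos hq' _
        have hqq : q * q ^ (-β) = q ^ (1 - β) := by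
          rw [mul_comm, ← Real.rpow_add_one (ne_of_gt hq') (-β), show -β + 1 = 1 - β by ring]
        rw [Real.norm_eq_abs, hGdef]
        simp only []
        rw [abs_mul, abs_mul, abs_of_nonneg h0, abs_of_nonneg hpow.le,
          abs_neg, abs_of_nonneg (by positivity : (0:ℝ) ≤ 1/β)]
        calc 1/β * ((1 - Real.exp (-(a * q))) * q ^ (-β))
            ≤ 1/β * (a * q * q ^ (-β)) := by
              apply mul_le_mul_of_nonneg_left _ (by positivity)
              exact mul_le_mul_of_nonneg_right h1 hpow.le
          _ = 1/β * a * q ^ (1 - β) := by rw [mul_assoc, hqq]; ring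
    · have : Tendsto (fun q : ℝ => q ^ (1 - β)) (𝓝[Ici 0] 0) (𝓝 ((0:ℝ) ^ (1 - β))) := by
        apply ContinuousAt.continuousWithinAt
        exact Real.continuousAt_rpow_const 0 _ (Or.inr (by linarith))
      rw [Real.zero_rpow (by intro h; linarith : (1:ℝ) - β ≠ 0)] at this
      simpa using (this.const_mul ((1/β) * a))
  have htop : Tendsto G atTop (𝓝 0) := by
    have h1 : Tendsto (fun q : ℝ => 1 - Real.exp (-(a * q))) atTop (𝓝 1) := by
      have : Tendsto (fun q : ℝ => -(a * q)) atTop atBot := by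
        apply tendsto_neg_atBot_iff.mpr
        exact Tendsto.const_mul_atTop ha' tendsto_id
      simpa using (tendsto_const_nhds.sub (Real.tendsto_exp_atBot.comp this))
    have h2 : Tendsto (fun q : ℝ => q ^ (-β)) atTop (𝓝 0) := tendsto_rpow_neg_atTop hβ0
    have h12 := (h1.mul h2).const_mul (-(1/β))
    rw [hGdef]
    convert h12 using 2
    norm_num
  have hFTC : ∫ q in Ioi (0:ℝ), g q = 0 - G 0 :=
    integral_Ioi_of_hasDerivAt_of_tendsto hcont hderiv hgint htop
  have hG0 : G 0 = 0 := by simp [hGdef]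
  have hsplit : ∫ q in Ioi (0:ℝ), (1 - Real.exp (-(a * q))) * q ^ (-β - 1)
      = (∫ q in Ioi (0:ℝ), g q) + (a / β) * ∫ q in Ioi (0:ℝ), Real.exp (-(a * q)) * q ^ (-β) := by
    rw [← integral_const_mul, ← integral_add hgint (hexpint.const_mul _)]
    apply setIntegral_congr_fun measurableSet_Ioi
    intro q _
    simp only [hgeq]
    ring
  have hgamma : ∫ q in Ioi (0:ℝ), Real.exp (-(a * q)) * q ^ (-β)
      = (1 / a) ^ (1 - β) * Real.Gamma (1 - β) := by
    rw [← Real.integral_rpow_mul_exp_neg_mul_Ioi (by linarith : (0:ℝ) < 1 - β) ha']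
    apply setIntegral_congr_fun measurableSet_Ioi
    intro q _
    rw [show (1:ℝ) - β - 1 = -β by ring]
    ring
  rw [hsplit, hFTC, hG0, hgamma]
  rw [one_div, Real.inv_rpow ha, ← Real.rpow_neg ha, show -(1 - β) = β - 1 by ring]
  have hb : a ^ β = a ^ (β - 1) * a := by
    rw [← Real.rpow_add_one (ne_of_gt ha') (β - 1), show β - 1 + 1 = β by ring]
  rw [hb]
  field_simp
  ring

/-- Covariance computation for the Karlin Gaussian process:
for `β ∈ (0,1)` and `0 < s ≤ t`,
`(β/Γ(1−β)) ∫_0^∞ ((1−e^{−2qs})/2)((1+e^{−2q(t−s)})/2) q^{−β−1} dq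
  = 2^{β−2}(s^β + t^β − (t−s)^β)`,
identifying `ζ_{2,β}` as a constant multiple of fractional Brownian motion with
Hurst index `β/2`. -/
theorem karlin_gaussian_covariance (β : ℝ) (hβ : β ∈ Set.Ioo (0:ℝ) 1)
    (s t : ℝ) (hs : 0 < s) (hst : s ≤ t) :
    β / Real.Gamma (1 - β) *
      ∫ q in Set.Ioi (0:ℝ),
        ((1 - Real.exp (-(2 * q * s))) / 2) * ((1 + Real.exp (-(2 * q * (t - s)))) / 2) *
          q ^ (-β - 1)
      = 2 ^ (β - 2) * (s ^ β + t ^ β - (t - s) ^ β) := by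
  obtain ⟨hβ0, hβ1⟩ := hβ
  have hts : (0:ℝ) ≤ t - s := by linarith
  have h1 := karlin_key_integrable hβ0 hβ1 (a := 2*s) (by linarith)
  have h2 := karlin_key_integrable hβ0 hβ1 (a := 2*t) (by linarith)
  have h3 := karlin_key_integrable hβ0 hβ1 (a := 2*(t-s)) (by linarith)
  have hfun : ∀ q : ℝ,
      ((1 - Real.exp (-(2 * q * s))) / 2) * ((1 + Real.exp (-(2 * q * (t - s)))) / 2) *
          q ^ (-β - 1)
      = (1/4) * ((1 - Real.exp (-(2*s * q))) * q ^ (-β - 1))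
        + (1/4) * ((1 - Real.exp (-(2*t * q))) * q ^ (-β - 1))
        - (1/4) * ((1 - Real.exp (-(2*(t-s) * q))) * q ^ (-β - 1)) := by
    intro q
    have e1 : Real.exp (-(2*s * q)) * Real.exp (-(2*(t-s) * q)) = Real.exp (-(2*t * q)) := by
      rw [← Real.exp_add]; congr 1; ring
    rw [show -(2*q*s) = -(2*s*q) by ring, show -(2*q*(t-s)) = -(2*(t-s)*q) by ring]
    linear_combination (-(q ^ (-β - 1))/4) * e1
  have hI : ∫ q in Set.Ioi (0:ℝ),
      ((1 - Real.exp (-(2 * q * s))) / 2) * ((1 + Real.exp (-(2 * q * (t - s)))) / 2) *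
          q ^ (-β - 1)
      = (1/4) * (∫ q in Set.Ioi (0:ℝ), (1 - Real.exp (-(2*s * q))) * q ^ (-β - 1))
        + (1/4) * (∫ q in Set.Ioi (0:ℝ), (1 - Real.exp (-(2*t * q))) * q ^ (-β - 1))
        - (1/4) * (∫ q in Set.Ioi (0:ℝ), (1 - Real.exp (-(2*(t-s) * q))) * q ^ (-β - 1)) := by
    rw [← integral_const_mul, ← integral_const_mul, ← integral_const_mul,
      ← integral_add (h1.const_mul _) (h2.const_mul _)]
    have hA : Integrable (fun q : ℝ => 1/4 * ((1 - Real.exp (-(2*s * q))) * q ^ (-β - 1))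
        + 1/4 * ((1 - Real.exp (-(2*t * q))) * q ^ (-β - 1))) (volume.restrict (Set.Ioi 0)) :=
      (h1.const_mul _).add (h2.const_mul _)
    rw [← integral_sub hA (h3.const_mul _)]
    refine setIntegral_congr_fun measurableSet_Ioi (fun q _ => ?_)
    simpa using hfun q
  rw [hI, karlin_key_value hβ0 hβ1 (show (0:ℝ) ≤ 2*s by linarith),
    karlin_key_value hβ0 hβ1 (show (0:ℝ) ≤ 2*t by linarith),
    karlin_key_value hβ0 hβ1 (show (0:ℝ) ≤ 2*(t-s) by linarith)]
  rw [Real.mul_rpow (by norm_num : (0:ℝ) ≤ 2) hs.le,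
    Real.mul_rpow (by norm_num : (0:ℝ) ≤ 2) (by linarith : (0:ℝ) ≤ t),
    Real.mul_rpow (by norm_num : (0:ℝ) ≤ 2) hts]
  have h4 : (2:ℝ) ^ (2:ℝ) = 4 := by
    have := Real.rpow_natCast (2:ℝ) 2
    norm_num at this
    linarith
  have h24 : (2:ℝ) ^ (β - 2) = 2 ^ β / 4 := by
    rw [Real.rpow_sub (by norm_num : (0:ℝ) < 2), h4]
  rw [h24]
  have hΓ : Real.Gamma (1 - β) ≠ 0 :=
    ne_of_gt (Real.Gamma_pos_of_pos (by linarith : (0:ℝ) < 1 - β))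
  have hβne : β ≠ 0 := ne_of_gt hβ0
  field_simp
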